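/- arXiv:2009.14761 — 4 statements merged into one kernel-verified Lean document; each statement's English description precedes it below -/
import Mathlib

section
/- Let n be an even positive integer, let x_1,…,x_n be real numbers with R·(n/2) − S² ≠ 0 where R = Σ_{i=1}^{n/2} x_{2i−1}² and S = Σ_{i=1}^{n/2} x_{2i−1}, let γ' > 0, and let a_i, Y_{2i−1}, d_i (i = 1,…,n/2) be arbitrary real numbers. For a function φ : ℝ → ℝ define T_φ = Σ_{i=1}^{n/2}(a_i − φ(x_{2i−1}))² + (2/γ')·Σ_{i=1}^{n/2}(Y_{2i−1} − φ(x_{2i−1}))·d_i − (2/n)·(Σ_{i=1}^{n/2}(a_i − φ(x_{2i−1})) + (1/γ')·Σ_{i=1}^{n/2} d_i)² − (n/2)·(Σ_{i=1}^{n/2}(a_i + (1/γ')·d_i − φ(x_{2i−1}))·(x_{2i−1} − S/(n/2)))² / (R·(n/2) − S²). Then for every affine function f : ℝ → ℝ one has T_f = T_0, where T_0 denotes T_φ with φ identically zero. -/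
open Finset

/-- The statistic `T_φ` of the paper, for arbitrary values `a_i` (the estimator values),
`Y_i` (the observations), `d_i` (the indicator values), scale `γ'` and a centering
function `φ`. -/
noncomputable def Tphi (n : ℕ) (x a Y d : ℕ → ℝ) (γ' : ℝ) (φ : ℝ → ℝ) : ℝ :=
  (∑ i ∈ Finset.Icc 1 (n / 2), (a i - φ (x (2 * i - 1))) ^ 2)
    + 2 / γ' * ∑ i ∈ Finset.Icc 1 (n / 2), (Y (2 * i - 1) - φ (x (2 * i - 1))) * d i
    - 2 / (n : ℝ) *
        ((∑ i ∈ Finset.Icc 1 (n / 2), (a i - φ (x (2 * i - 1))))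
          + 1 / γ' * ∑ i ∈ Finset.Icc 1 (n / 2), d i) ^ 2
    - ((n : ℝ) / 2) *
        (∑ i ∈ Finset.Icc 1 (n / 2),
          (a i + 1 / γ' * d i - φ (x (2 * i - 1)))
            * (x (2 * i - 1) - (∑ j ∈ Finset.Icc 1 (n / 2), x (2 * j - 1)) / ((n : ℝ) / 2))) ^ 2
      / ((∑ j ∈ Finset.Icc 1 (n / 2), (x (2 * j - 1)) ^ 2) * ((n : ℝ) / 2)
          - (∑ j ∈ Finset.Icc 1 (n / 2), x (2 * j - 1)) ^ 2)

/-- The bias-corrected statistic is unchanged by centering at any affine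
function: `T_f = T_0` for every affine `f`. -/
theorem stmt2 (n : ℕ) (hn : 0 < n) (heven : Even n)
    (x a Y d : ℕ → ℝ)
    (hΔ : (∑ j ∈ Finset.Icc 1 (n / 2), (x (2 * j - 1)) ^ 2) * ((n : ℝ) / 2)
        - (∑ j ∈ Finset.Icc 1 (n / 2), x (2 * j - 1)) ^ 2 ≠ 0)
    (γ' : ℝ) (hγ' : 0 < γ')
    (f : ℝ → ℝ) (hf : ∃ m c : ℝ, ∀ t : ℝ, f t = m * t + c) :
    Tphi n x a Y d γ' f = Tphi n x a Y d γ' (fun _ => 0) := by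
  obtain ⟨m, c, hmc⟩ := hf
  obtain ⟨k, hk⟩ := heven
  have hk0 : 0 < k := by omega
  have hn2 : n / 2 = k := by omega
  have hnk : (n : ℝ) = 2 * (k : ℝ) := by
    have : n = 2 * k := by omega
    rw [this]; push_cast; ring
  have hk' : (0 : ℝ) < (k : ℝ) := by exact_mod_cast hk0
  unfold Tphi
  simp only [hmc, hn2, hnk, sub_zero]
  set s : Finset ℕ := Finset.Icc 1 k with hs
  have hcard : (s.card : ℝ) = (k : ℝ) := by simp [hs]
  set X : ℕ → ℝ := fun i => x (2 * i - 1) with hX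
  set S := ∑ j ∈ s, X j with hS
  set R := ∑ j ∈ s, (X j) ^ 2 with hR
  set A := ∑ i ∈ s, a i with hA
  set D := ∑ i ∈ s, d i with hD
  set P := ∑ i ∈ s, a i * X i with hP
  set Q := ∑ i ∈ s, d i * X i with hQ
  have h2k : (2 : ℝ) * (k : ℝ) / 2 = (k : ℝ) := by ring
  rw [h2k]
  have e1 : ∑ i ∈ s, (a i - (m * X i + c)) ^ 2
      = (∑ i ∈ s, (a i) ^ 2) - 2 * m * P - 2 * c * A + m ^ 2 * R + 2 * m * c * S
        + c ^ 2 * (k : ℝ) := by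
    have h : ∀ i ∈ s, (a i - (m * X i + c)) ^ 2
        = (a i) ^ 2 - 2 * m * (a i * X i) - 2 * c * a i + m ^ 2 * (X i) ^ 2
          + 2 * m * c * X i + c ^ 2 := fun i _ => by ring
    rw [Finset.sum_congr rfl h]
    simp only [Finset.sum_add_distrib, Finset.sum_sub_distrib, ← Finset.mul_sum,
      Finset.sum_const, nsmul_eq_mul, hcard]
    rw [hP, hA, hR, hS]; ring
  have e2 : ∑ i ∈ s, (Y (2 * i - 1) - (m * X i + c)) * d i
      = (∑ i ∈ s, Y (2 * i - 1) * d i) - m * Q - c * D := by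
    have h : ∀ i ∈ s, (Y (2 * i - 1) - (m * X i + c)) * d i
        = Y (2 * i - 1) * d i - m * (d i * X i) - c * d i := fun i _ => by ring
    rw [Finset.sum_congr rfl h]
    simp only [Finset.sum_sub_distrib, ← Finset.mul_sum]
    rw [hQ, hD]
  have e3 : ∑ i ∈ s, (a i - (m * X i + c)) = A - m * S - c * (k : ℝ) := by
    have h : ∀ i ∈ s, a i - (m * X i + c) = a i - m * X i - c := fun i _ => by ring
    rw [Finset.sum_congr rfl h]
    simp only [Finset.sum_sub_distrib, ← Finset.mul_sum, Finset.sum_const, nsmul_eq_mul, hcard]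
    rw [hA, hS]; ring
  have e4 : ∑ i ∈ s, (a i + 1 / γ' * d i - (m * X i + c)) * (X i - S / (k : ℝ))
      = P + 1 / γ' * Q - m * R - c * S
        - S / (k : ℝ) * A - S / (k : ℝ) * (1 / γ') * D + m * (S / (k : ℝ)) * S
        + c * (S / (k : ℝ)) * (k : ℝ) := by
    have h : ∀ i ∈ s, (a i + 1 / γ' * d i - (m * X i + c)) * (X i - S / (k : ℝ))
        = a i * X i + 1 / γ' * (d i * X i) - m * (X i) ^ 2 - c * X i
          - S / (k : ℝ) * a i - S / (k : ℝ) * (1 / γ') * d i + m * (S / (k : ℝ)) * X i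
          + S / (k : ℝ) * c := fun i _ => by ring
    rw [Finset.sum_congr rfl h]
    simp only [Finset.sum_add_distrib, Finset.sum_sub_distrib, ← Finset.mul_sum,
      Finset.sum_const, nsmul_eq_mul, hcard]
    rw [hP, hQ, hR, hS, hA, hD]; ring
  have e5 : ∑ i ∈ s, (a i + 1 / γ' * d i) * (X i - S / (k : ℝ))
      = P + 1 / γ' * Q - S / (k : ℝ) * A - S / (k : ℝ) * (1 / γ') * D := by
    have h : ∀ i ∈ s, (a i + 1 / γ' * d i) * (X i - S / (k : ℝ))
        = a i * X i + 1 / γ' * (d i * X i) - S / (k : ℝ) * a i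
          - S / (k : ℝ) * (1 / γ') * d i := fun i _ => by ring
    rw [Finset.sum_congr rfl h]
    simp only [Finset.sum_add_distrib, Finset.sum_sub_distrib, ← Finset.mul_sum]
    rw [hP, hQ, hA, hD]
  rw [e1, e2, e3, e4, e5]
  have hΔ' : R * (k : ℝ) - S ^ 2 ≠ 0 := by
    have := hΔ
    simp only [hn2, hnk, h2k] at this
    convert this using 2
  have hγ : γ' ≠ 0 := ne_of_gt hγ'
  have hk'' : (k : ℝ) ≠ 0 := ne_of_gt hk'
  field_simp
  ring
end

section
/- Let 0 ≤ a < b ≤ 1, let h > 0, let g : ℝ → ℝ be an affine function, and suppose the data satisfy Y_{2i} = g(x_{2i}) + ε_{2i} with ε_{2i} ≤ 0, where for every j ∈ {0, 1, …, 2⌈(b−a)/h⌉ + 1} the interval (a + (j−1)·h/2, a + j·h/2] contains at least one even-indexed design point x_{2i}. Define Z_j(h) := max{ ε_{2i} : x_{2i} ∈ (a + (j−1)·h/2, a + j·h/2] }. Then for every x ∈ (a, b]: |ĝ(x) − g(x)| ≤ max{ |Z_j(h)| : j = 0, …, 2⌈(b−a)/h⌉ + 1 }, where ĝ is the boundary estimator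 with bandwidth h. -/
/-- The boundary estimator `ĝ` with bandwidth `hh`, computed from the even-indexed
observations `Y_{2i}`, `i = 1,…,N/2`:
`ĝ(t) = min{p₀ | ∃ p₁, Y_{2i} ≤ p₀ + p₁·(x_{2i} − t) for all i with |t − x_{2i}| < hh}`. -/
noncomputable def gHat (N : ℕ) (hh : ℝ) (x Y : ℕ → ℝ) (t : ℝ) : ℝ :=
  sInf {p₀ : ℝ | ∃ p₁ : ℝ, ∀ i ∈ Finset.Icc 1 (N / 2),
    |t - x (2 * i)| < hh → Y (2 * i) ≤ p₀ + p₁ * (x (2 * i) - t)}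

/-- Deterministic uniform bound on the estimation error of the boundary
estimator over `(a,b]` for an affine regression function: `|ĝ(x) − g(x)|` is bounded by the
largest of the blockwise error maxima `|Z_j(h)|`, `j = 0,…,2⌈(b−a)/h⌉+1`. -/
theorem stmt15 (a b : ℝ) (hab : 0 ≤ a ∧ a < b ∧ b ≤ 1)
    (h : ℝ) (hh : 0 < h)
    (g : ℝ → ℝ) (hg : ∃ m c : ℝ, ∀ t : ℝ, g t = m * t + c)
    (N : ℕ) (x Y ε : ℕ → ℝ)
    (hmodel : ∀ i ∈ Finset.Icc 1 (N / 2), Y (2 * i) = g (x (2 * i)) + ε (2 * i))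
    (hεneg : ∀ i ∈ Finset.Icc 1 (N / 2), ε (2 * i) ≤ 0)
    (J : ℕ) (hJ : J = 2 * ⌈(b - a) / h⌉₊ + 1)
    (hwin : ∀ j : ℕ, j ≤ J → ∃ i ∈ Finset.Icc 1 (N / 2),
      x (2 * i) ∈ Set.Ioc (a + ((j : ℝ) - 1) * h / 2) (a + (j : ℝ) * h / 2))
    (Z : ℕ → ℝ)
    (hZ : ∀ j : ℕ, Z j = sSup {v : ℝ | ∃ i ∈ Finset.Icc 1 (N / 2),
      x (2 * i) ∈ Set.Ioc (a + ((j : ℝ) - 1) * h / 2) (a + (j : ℝ) * h / 2) ∧ v = ε (2 * i)}) :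
    ∀ t ∈ Set.Ioc a b,
      |gHat N h x Y t - g t| ≤
        (Finset.range (J + 1)).sup' ⟨0, Finset.mem_range.mpr (Nat.succ_pos J)⟩
          (fun j => |Z j|) := by
  obtain ⟨ha0, hab', hb1⟩ := hab
  obtain ⟨m, c, hgmc⟩ := hg
  intro t ht
  obtain ⟨hta, htb⟩ := ht
  set M : ℝ := (Finset.range (J + 1)).sup' ⟨0, Finset.mem_range.mpr (Nat.succ_pos J)⟩
      (fun j => |Z j|) with hMdef
  have hMle : ∀ k : ℕ, k ≤ J → |Z k| ≤ M := by
    intro k hk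
    exact Finset.le_sup' (fun j => |Z j|) (Finset.mem_range.mpr (Nat.lt_succ_of_le hk))
  have hM0 : 0 ≤ M := le_trans (abs_nonneg (Z 0)) (hMle 0 (Nat.zero_le J))
  -- the feasible set
  set S : Set ℝ := {p₀ : ℝ | ∃ p₁ : ℝ, ∀ i ∈ Finset.Icc 1 (N / 2),
    |t - x (2 * i)| < h → Y (2 * i) ≤ p₀ + p₁ * (x (2 * i) - t)} with hSdef
  -- g t is feasible
  have hgtS : g t ∈ S := by
    refine ⟨m, fun i hi _ => ?_⟩
    have := hmodel i hi
    have hε := hεneg i hi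
    rw [this, hgmc (x (2 * i)), hgmc t]
    nlinarith
  -- attainment of the blockwise maxima
  have key : ∀ k : ℕ, k ≤ J → ∃ i ∈ Finset.Icc 1 (N / 2),
      x (2 * i) ∈ Set.Ioc (a + ((k : ℝ) - 1) * h / 2) (a + (k : ℝ) * h / 2) ∧
      ε (2 * i) = Z k := by
    intro k hk
    set T : Set ℝ := {v : ℝ | ∃ i ∈ Finset.Icc 1 (N / 2),
      x (2 * i) ∈ Set.Ioc (a + ((k : ℝ) - 1) * h / 2) (a + (k : ℝ) * h / 2) ∧ v = ε (2 * i)}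
      with hTdef
    have hne : T.Nonempty := by
      obtain ⟨i, hi, hx⟩ := hwin k hk
      exact ⟨ε (2 * i), i, hi, hx, rfl⟩
    have hfin : T.Finite := by
      apply Set.Finite.subset ((Finset.Icc 1 (N / 2)).finite_toSet.image (fun i => ε (2 * i)))
      rintro v ⟨i, hi, _, rfl⟩
      exact ⟨i, hi, rfl⟩
    have hmem : sSup T ∈ T := hne.csSup_mem hfin
    obtain ⟨i, hi, hx, hv⟩ := hmem
    exact ⟨i, hi, hx, by rw [hZ k, ← hv]⟩
  -- the window index of t
  set j : ℕ := ⌈2 * (t - a) / h⌉₊ with hjdef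
  have hta' : 0 < 2 * (t - a) / h := div_pos (by linarith) hh
  have hj1 : 1 ≤ j := Nat.one_le_iff_ne_zero.mpr (by
    intro h0
    have := Nat.ceil_eq_zero.mp h0
    linarith)
  have hjJ : j + 1 ≤ J := by
    have h2 : (b - a) / h ≤ (⌈(b - a) / h⌉₊ : ℝ) := Nat.le_ceil _
    rw [div_le_iff₀ hh] at h2
    have h1 : 2 * (t - a) / h ≤ ((2 * ⌈(b - a) / h⌉₊ : ℕ) : ℝ) := by
      rw [div_le_iff₀ hh]
      push_cast
      nlinarith
    have := Nat.ceil_le.mpr h1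
    omega
  have hj1J : j - 1 ≤ J := by omega
  -- bounds on t within its window
  have ht_ub : t ≤ a + (j : ℝ) * h / 2 := by
    have := Nat.le_ceil (2 * (t - a) / h)
    rw [div_le_iff₀ hh] at this
    linarith
  have ht_lb : a + ((j : ℝ) - 1) * h / 2 < t := by
    have hlt : (j - 1 : ℕ) < j := by omega
    have := Nat.lt_ceil.mp hlt
    rw [lt_div_iff₀ hh] at this
    have hcast : ((j - 1 : ℕ) : ℝ) = (j : ℝ) - 1 := by
      push_cast [Nat.cast_sub hj1]; ring
    rw [hcast] at this
    linarith
  -- design points in windows j-1 and j+1 attaining Z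
  obtain ⟨iu, hiu, hxu, hεu⟩ := key (j - 1) hj1J
  obtain ⟨iv, hiv, hxv, hεv⟩ := key (j + 1) hjJ
  set u : ℝ := x (2 * iu) with hudef
  set v : ℝ := x (2 * iv) with hvdef
  have hcast1 : ((j - 1 : ℕ) : ℝ) = (j : ℝ) - 1 := by
    push_cast [Nat.cast_sub hj1]; ring
  have hcast2 : ((j + 1 : ℕ) : ℝ) = (j : ℝ) + 1 := by push_cast; ring
  rw [hcast1] at hxu
  rw [hcast2] at hxv
  have hu_ub : u ≤ a + ((j : ℝ) - 1) * h / 2 := hxu.2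
  have hu_lb : a + ((j : ℝ) - 2) * h / 2 < u := by
    have := hxu.1; linarith [this]
  have hv_lb : a + (j : ℝ) * h / 2 < v := by
    have := hxv.1; linarith [this]
  have hv_ub : v ≤ a + ((j : ℝ) + 1) * h / 2 := hxv.2
  have hut : u < t := lt_of_le_of_lt hu_ub ht_lb
  have htv : t < v := lt_of_le_of_lt ht_ub hv_lb
  have hdu : |t - u| < h := by
    rw [abs_lt]; constructor <;> linarith
  have hdv : |t - v| < h := by
    rw [abs_lt]; constructor <;> linarith
  -- convex combination
  have hvu : 0 < v - u := by linarith
  set lam : ℝ := (v - t) / (v - u) with hlamdef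
  have hlam0 : 0 ≤ lam := div_nonneg (by linarith) (by linarith)
  have hlam1 : lam ≤ 1 := by
    rw [div_le_one hvu]; linarith
  have hcomb : lam * u + (1 - lam) * v = t := by
    field_simp [hlamdef]
    have hlv : lam * (v - u) = v - t := by
      rw [hlamdef]; exact div_mul_cancel₀ _ (ne_of_gt hvu)
    linear_combination -hlv
  -- every feasible p₀ is at least g t - M
  have hlower : ∀ p₀ ∈ S, g t - M ≤ p₀ := by
    intro p₀ hp₀
    obtain ⟨p₁, hp₁⟩ := hp₀
    have hA : Y (2 * iu) ≤ p₀ + p₁ * (u - t) := hp₁ iu hiu hdu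
    have hB : Y (2 * iv) ≤ p₀ + p₁ * (v - t) := hp₁ iv hiv hdv
    have hYu : Y (2 * iu) = m * u + c + Z (j - 1) := by
      rw [hmodel iu hiu, hgmc, hεu]
    have hYv : Y (2 * iv) = m * v + c + Z (j + 1) := by
      rw [hmodel iv hiv, hgmc, hεv]
    have hZu : -M ≤ Z (j - 1) := by
      linarith [neg_abs_le (Z (j - 1)), hMle (j - 1) hj1J]
    have hZv : -M ≤ Z (j + 1) := by
      linarith [neg_abs_le (Z (j + 1)), hMle (j + 1) hjJ]
    -- combine: λ·A + (1-λ)·B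
    have hcombA : lam * Y (2 * iu) ≤ lam * (p₀ + p₁ * (u - t)) :=
      mul_le_mul_of_nonneg_left hA hlam0
    have hcombB : (1 - lam) * Y (2 * iv) ≤ (1 - lam) * (p₀ + p₁ * (v - t)) :=
      mul_le_mul_of_nonneg_left hB (by linarith)
    have hzero : lam * (u - t) + (1 - lam) * (v - t) = 0 := by
      have h0 : lam * u + (1 - lam) * v - t = 0 := by rw [hcomb]; ring
      linarith [h0]
    have hgt : g t = m * t + c := hgmc t
    have hsum : lam * (p₀ + p₁ * (u - t)) + (1 - lam) * (p₀ + p₁ * (v - t))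
        = p₀ + p₁ * (lam * (u - t) + (1 - lam) * (v - t)) := by ring
    rw [hzero, mul_zero, add_zero] at hsum
    have hLHS : lam * Y (2 * iu) + (1 - lam) * Y (2 * iv)
        = m * t + c + lam * Z (j - 1) + (1 - lam) * Z (j + 1) := by
      rw [hYu, hYv, ← hcomb]; ring
    have e1 : lam * (-M) ≤ lam * Z (j - 1) := mul_le_mul_of_nonneg_left hZu hlam0
    have e2 : (1 - lam) * (-M) ≤ (1 - lam) * Z (j + 1) :=
      mul_le_mul_of_nonneg_left hZv (by linarith)
    have e3 : lam * (-M) + (1 - lam) * (-M) = -M := by ring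
    linarith [hcombA, hcombB, hsum, hLHS, e1, e2, e3]
  have hbdd : BddBelow S := ⟨g t - M, hlower⟩
  have hSne : S.Nonempty := ⟨g t, hgtS⟩
  have hinf_le : gHat N h x Y t ≤ g t := csInf_le hbdd hgtS
  have hle_inf : g t - M ≤ gHat N h x Y t := le_csInf hSne hlower
  rw [abs_le]
  constructor
  · linarith
  · linarith
end

section
/- Let m be a positive integer, p ∈ (0,1), and let X be a binomially distributed random variable with parameters m and p. Let k ∈ {0, 1, …, m} with k ≥ 4·m·p. Then P(X ≥ k) ≤ 2·P(X = k); equivalently, Σ_{l=k}^{m} C(m,l)·p^l·(1−p)^{m−l} ≤ 2·C(m,k)·p^k·(1−p)^{m−k}, where C(m,l) denotes the binomial coefficient. -/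
open Finset

/-- For a binomial distribution with parameters `m`, `p` and any
`k ∈ {0,…,m}` with `k ≥ 4·m·p` one has `P(X ≥ k) ≤ 2·P(X = k)`. -/
theorem stmt16 (m : ℕ) (p : ℝ) (hp : p ∈ Set.Ioo (0 : ℝ) 1)
    (k : ℕ) (hk : k ≤ m) (h4 : 4 * (m : ℝ) * p ≤ (k : ℝ)) :
    ∑ l ∈ Finset.Icc k m, (m.choose l : ℝ) * p ^ l * (1 - p) ^ (m - l)
      ≤ 2 * (m.choose k : ℝ) * p ^ k * (1 - p) ^ (m - k) := by
  obtain ⟨hp0, hp1⟩ := hp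
  rcases Nat.eq_zero_or_pos m with hm | hm
  · subst hm
    interval_cases k
    norm_num
  have hpq : p ≤ 1/4 := by
    have hk' : (k:ℝ) ≤ m := by exact_mod_cast hk
    have hm' : (1:ℝ) ≤ m := by exact_mod_cast hm
    nlinarith
  set t : ℕ → ℝ := fun l => (m.choose l : ℝ) * p ^ l * (1 - p) ^ (m - l) with ht
  have htnn : ∀ l, 0 ≤ t l := fun l =>
    mul_nonneg (mul_nonneg (by positivity) (by positivity))
      (pow_nonneg (by linarith) _)
  have step : ∀ l, k ≤ l → l < m → t (l+1) ≤ (1/2) * t l := by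
    intro l hkl hlm
    have hl0 : (0:ℝ) ≤ l := Nat.cast_nonneg l
    have hkl' : (k:ℝ) ≤ l := Nat.cast_le.2 hkl
    have hlm' : (l:ℝ) ≤ m := Nat.cast_le.2 hlm.le
    have hc : ((m.choose (l+1)) : ℝ) * (l+1) = (m.choose l) * ((m:ℝ) - l) := by
      have h := Nat.choose_succ_right_eq m l
      have : ((m.choose (l+1) * (l+1) : ℕ) : ℝ) = ((m.choose l * (m - l) : ℕ) : ℝ) := by
        exact_mod_cast congrArg (Nat.cast (R := ℝ)) h
      push_cast [Nat.cast_sub hlm.le] at this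
      linarith
    have hsub : m - l = (m - (l+1)) + 1 := by omega
    have hineq : 2 * ((m:ℝ) - l) * p ≤ (1 - p) * ((l:ℝ) + 1) := by
      nlinarith [mul_nonneg hl0 hp0.le, mul_nonneg hl0 (by linarith : (0:ℝ) ≤ 1/2 - p)]
    have hmul : ((l:ℝ)+1) * t (l+1) ≤ ((l:ℝ)+1) * ((1/2) * t l) := by
      simp only [ht]
      rw [hsub]
      have hB : (0:ℝ) ≤ (1 - p) ^ (m - (l+1)) := pow_nonneg (by linarith) _
      have hA : (0:ℝ) ≤ p ^ l := pow_nonneg hp0.le _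
      have hc0 : (0:ℝ) ≤ (m.choose l : ℝ) := Nat.cast_nonneg _
      have key : (m.choose l : ℝ) * (((m:ℝ) - l) * p) ≤
          (m.choose l : ℝ) * ((1/2) * ((1 - p) * ((l:ℝ) + 1))) :=
        mul_le_mul_of_nonneg_left (by linarith) hc0
      have := mul_le_mul_of_nonneg_right (mul_le_mul_of_nonneg_right key hA) hB
      calc ((l:ℝ)+1) * ((m.choose (l+1) : ℝ) * p ^ (l+1) * (1 - p) ^ (m - (l+1)))
          = ((m.choose (l+1)) : ℝ) * ((l:ℝ)+1) * p ^ l * p * (1 - p) ^ (m - (l+1)) := by ring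
        _ = (m.choose l : ℝ) * ((m:ℝ) - l) * p ^ l * p * (1 - p) ^ (m - (l+1)) := by
              rw [hc]
        _ = (m.choose l : ℝ) * (((m:ℝ) - l) * p) * p ^ l * (1 - p) ^ (m - (l+1)) := by ring
        _ ≤ (m.choose l : ℝ) * ((1/2) * ((1 - p) * ((l:ℝ) + 1))) * p ^ l * (1 - p) ^ (m - (l+1)) := by
              exact mul_le_mul_of_nonneg_right (mul_le_mul_of_nonneg_right key hA) hB
        _ = ((l:ℝ)+1) * ((1/2) * ((m.choose l : ℝ) * p ^ l * ((1 - p) ^ (m - (l+1)) * (1 - p)))) := by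
              ring
        _ = ((l:ℝ)+1) * ((1/2) * ((m.choose l : ℝ) * p ^ l * (1 - p) ^ ((m - (l+1)) + 1))) := by
              rw [pow_succ]
    have hpos : (0:ℝ) < (l:ℝ) + 1 := by positivity
    exact le_of_mul_le_mul_left hmul hpos
  have bound : ∀ l, k ≤ l → l ≤ m → t l ≤ t k * (1/2) ^ (l - k) := by
    intro l hkl
    induction l, hkl using Nat.le_induction with
    | base =>
      intro _
      simp
    | succ n hn ih =>
      intro hnm
      have h1 : t (n+1) ≤ (1/2) * t n := step n hn (by omega)
      have h2 : t n ≤ t k * (1/2) ^ (n - k) := ih (by omega)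
      have hs : n + 1 - k = (n - k) + 1 := by omega
      rw [hs, pow_succ]
      have := mul_le_mul_of_nonneg_left h2 (by norm_num : (0:ℝ) ≤ 1/2)
      calc t (n+1) ≤ (1/2) * t n := h1
        _ ≤ (1/2) * (t k * (1/2) ^ (n - k)) := this
        _ = t k * ((1/2) ^ (n - k) * (1/2)) := by ring
  calc ∑ l ∈ Finset.Icc k m, t l
      ≤ ∑ l ∈ Finset.Icc k m, t k * (1/2) ^ (l - k) := by
        refine Finset.sum_le_sum fun l hl => ?_
        rw [Finset.mem_Icc] at hl
        exact bound l hl.1 hl.2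
    _ = t k * ∑ l ∈ Finset.Icc k m, ((1/2):ℝ) ^ (l - k) := by
        rw [Finset.mul_sum]
    _ = t k * ∑ j ∈ Finset.range (m + 1 - k), ((1/2):ℝ) ^ j := by
        rw [← Finset.Ico_add_one_right_eq_Icc, Finset.sum_Ico_eq_sum_range]
        congr 1
        · refine Finset.sum_congr rfl fun j _ => ?_
          congr 1
          omega
    _ ≤ t k * 2 := by
        exact mul_le_mul_of_nonneg_left (sum_geometric_two_le _) (htnn k)
    _ = 2 * (m.choose k : ℝ) * p ^ k * (1 - p) ^ (m - k) := by
        simp only [ht]; ring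
end

section
/- Let n and k be integers with 2 ≤ k ≤ n−1, and let f_{k:n}(x) := (n!/((k−1)!·(n−k)!))·x^{k−1}·(1−x)^{n−k} for x ∈ [0,1] (the density of the k-th order statistic of n i.i.d. uniform[0,1] random variables). Set m := (k−1)/(n−1) and A := (n−1)²/(6(k−1)) + (n−1)²/(6(n−k)). Then: (i) for every x ∈ [0,1] with |x − m| ≤ (1 − 2^{−1/3})·min{(k−1)/(n−1), (n−k)/(n−1)}, one has f_{k:n}(x) ≤ (20/π)·n·√(n/((k−1)(n−k)))·exp(−A·(x−m)²); (ii) for every c with 0 ≤ c ≤ (1 − 2^{−1/3})·min{(k−1)/(n−1), (n−k)/(n−1)} and every x ∈ [0,1] with |x − m| ≥ c, one has f_{k:n}(x) ≤ (20/π)·n·√(n/((k−1)(n−k)))·exp(−A·c²). -/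
/-- The density of the `k`-th ascending order statistic of `n` i.i.d. uniform `[0,1]`
random variables (a Beta(k, n−k+1) density). -/
noncomputable def orderStatDensity (n k : ℕ) (x : ℝ) : ℝ :=
  (n.factorial : ℝ) / ((k - 1).factorial * (n - k).factorial)
    * x ^ (k - 1) * (1 - x) ^ (n - k)

open Real

lemma stmt19_stirling_le (n : ℕ) : Real.sqrt π ≤ Stirling.stirlingSeq (n+1) :=
  Stirling.stirlingSeq'_antitone.le_of_tendsto
    (Stirling.tendsto_stirlingSeq_sqrt_pi.comp (Filter.tendsto_add_atTop_nat 1)) n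

lemma stmt19_stirling_ge (n : ℕ) : Stirling.stirlingSeq (n+1) ≤ Real.exp 1 / Real.sqrt 2 := by
  have := Stirling.stirlingSeq'_antitone (Nat.zero_le n)
  simpa [Stirling.stirlingSeq_one] using this

lemma stmt19_fact_lower (n : ℕ) (hn : 1 ≤ n) :
    Real.sqrt (2 * π * n) * ((n : ℝ) / Real.exp 1) ^ n ≤ n.factorial := by
  obtain ⟨m, rfl⟩ : ∃ m, n = m + 1 := ⟨n-1, by omega⟩
  have h := stmt19_stirling_le m
  rw [Stirling.stirlingSeq] at h
  have hd : (0:ℝ) < Real.sqrt (2*((m+1:ℕ):ℝ)) * (((m+1:ℕ):ℝ) / Real.exp 1) ^ (m+1) := by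
    have h1 : (0:ℝ) < ((m+1:ℕ):ℝ) := by positivity
    positivity
  rw [le_div_iff₀ hd] at h
  calc Real.sqrt (2 * π * ((m+1:ℕ):ℝ)) * (((m+1:ℕ) : ℝ) / Real.exp 1) ^ (m+1)
      = (Real.sqrt π * Real.sqrt (2*((m+1:ℕ):ℝ))) * (((m+1:ℕ):ℝ) / Real.exp 1) ^ (m+1) := by
        rw [← Real.sqrt_mul (by positivity)]
        congr 2
        ring
    _ = Real.sqrt π * (Real.sqrt (2*((m+1:ℕ):ℝ)) * (((m+1:ℕ):ℝ) / Real.exp 1) ^ (m+1)) := by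
        ring
    _ ≤ ((m+1).factorial : ℝ) := h

lemma stmt19_fact_upper (n : ℕ) (hn : 1 ≤ n) :
    (n.factorial : ℝ) ≤ Real.exp 1 * Real.sqrt n * ((n : ℝ) / Real.exp 1) ^ n := by
  obtain ⟨m, rfl⟩ : ∃ m, n = m + 1 := ⟨n-1, by omega⟩
  have h := stmt19_stirling_ge m
  rw [Stirling.stirlingSeq] at h
  have hd : (0:ℝ) < Real.sqrt (2*((m+1:ℕ):ℝ)) * (((m+1:ℕ):ℝ) / Real.exp 1) ^ (m+1) := by
    have h1 : (0:ℝ) < ((m+1:ℕ):ℝ) := by positivity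
    positivity
  rw [div_le_iff₀ hd] at h
  calc ((m+1).factorial : ℝ)
      ≤ Real.exp 1 / Real.sqrt 2 * (Real.sqrt (2*((m+1:ℕ):ℝ)) * (((m+1:ℕ):ℝ) / Real.exp 1) ^ (m+1)) := h
    _ = Real.exp 1 * (Real.sqrt (2*((m+1:ℕ):ℝ)) / Real.sqrt 2) * (((m+1:ℕ):ℝ) / Real.exp 1) ^ (m+1) := by
        ring
    _ = Real.exp 1 * Real.sqrt ((m+1:ℕ)) * (((m+1:ℕ):ℝ) / Real.exp 1) ^ (m+1) := by
        congr 2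
        rw [← Real.sqrt_div (by positivity : (0:ℝ) ≤ 2*((m+1:ℕ):ℝ))]
        congr 1
        have : (0:ℝ) < 2 := by norm_num
        field_simp

lemma stmt19_log_cubic (u : ℝ) (hu : -1 < u) : Real.log (1+u) ≤ u - u^2/2 + u^3/3 := by
  have key : ∀ v : ℝ, -1 < v → HasDerivAt (fun w => w - w^2/2 + w^3/3 - Real.log (1+w))
      (v^3/(1+v)) v := by
    intro v hv
    have h1 : HasDerivAt (fun w : ℝ => 1 + w) 1 v := by simpa using (hasDerivAt_id v).const_add 1
    have h2 : HasDerivAt (fun w : ℝ => Real.log (1+w)) (1/(1+v)) v := by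
      simpa using (h1.log (by linarith))
    have h3 : HasDerivAt (fun w : ℝ => w - w^2/2 + w^3/3) (1 - v + v^2) v := by
      have := ((hasDerivAt_id v).sub ((hasDerivAt_pow 2 v).div_const 2)).add
        ((hasDerivAt_pow 3 v).div_const 3)
      refine this.congr_deriv ?_; ring
    have := h3.sub h2
    refine this.congr_deriv ?_
    have hne : (1:ℝ)+v ≠ 0 := by linarith
    field_simp
    ring
  rcases le_or_gt 0 u with h0 | h0
  · -- monotone on [0, ∞)
    have mono : MonotoneOn (fun w => w - w^2/2 + w^3/3 - Real.log (1+w)) (Set.Icc 0 u) := by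
      apply monotoneOn_of_deriv_nonneg (convex_Icc 0 u)
      · apply ContinuousOn.sub (by fun_prop)
        apply ContinuousOn.log (by fun_prop)
        intro x hx; simp only [Set.mem_Icc] at hx; nlinarith [hx.1]
      · intro x hx
        rw [interior_Icc, Set.mem_Ioo] at hx
        exact ((key x (by linarith [hx.1])).differentiableAt).differentiableWithinAt
      · intro x hx
        rw [interior_Icc, Set.mem_Ioo] at hx
        rw [HasDerivAt.deriv (key x (by linarith [hx.1]))]
        exact div_nonneg (pow_nonneg hx.1.le 3) (by linarith [hx.1])
    have := mono (Set.left_mem_Icc.2 h0) (Set.right_mem_Icc.2 h0) h0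
    simp only [Real.log_one] at this
    norm_num at this
    linarith
  · have anti : AntitoneOn (fun w => w - w^2/2 + w^3/3 - Real.log (1+w)) (Set.Icc u 0) := by
      apply antitoneOn_of_deriv_nonpos (convex_Icc u 0)
      · apply ContinuousOn.sub (by fun_prop)
        apply ContinuousOn.log (by fun_prop)
        intro x hx; simp only [Set.mem_Icc] at hx; nlinarith [hx.1]
      · intro x hx
        rw [interior_Icc, Set.mem_Ioo] at hx
        exact ((key x (by linarith [hx.1])).differentiableAt).differentiableWithinAt
      · intro x hx
        rw [interior_Icc, Set.mem_Ioo] at hx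
        rw [HasDerivAt.deriv (key x (by linarith [hx.1]))]
        have h1 : (0:ℝ) < 1 + x := by linarith [hx.1]
        have h2 : x^3 ≤ 0 := Odd.pow_nonpos (by decide) hx.2.le
        exact div_nonpos_of_nonpos_of_nonneg h2 h1.le
    have := anti (Set.left_mem_Icc.2 h0.le) (Set.right_mem_Icc.2 h0.le) h0.le
    simp only [Real.log_one] at this
    norm_num at this
    linarith

-- pure algebra: the cubic polynomial bound
lemma stmt19_alg_bound (p q s : ℝ) (hp : 1 ≤ p) (hq : 1 ≤ q) (hs : |s| ≤ min p q) :
    p * (s/p - (s/p)^2/2 + (s/p)^3/3) + q * ((-s/q) - (-s/q)^2/2 + (-s/q)^3/3) ≤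
      -(s^2/(6*p) + s^2/(6*q)) := by
  have hp0 : (0:ℝ) < p := by linarith
  have hq0 : (0:ℝ) < q := by linarith
  have hkey : s * (q - p) ≤ p * q := by
    rcases le_total p q with hle | hle
    · have h2 : |s| ≤ p := le_trans hs (min_le_left _ _)
      calc s * (q-p) ≤ |s| * (q-p) :=
            mul_le_mul_of_nonneg_right (le_abs_self s) (by linarith)
        _ ≤ p * (q-p) := mul_le_mul_of_nonneg_right h2 (by linarith)
        _ ≤ p * q := by nlinarith
    · have h2 : |s| ≤ q := le_trans hs (min_le_right _ _)
      calc s * (q-p) = (-s) * (p-q) := by ring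
        _ ≤ |s| * (p-q) := mul_le_mul_of_nonneg_right (neg_le_abs s) (by linarith)
        _ ≤ q * (p-q) := mul_le_mul_of_nonneg_right h2 (by linarith)
        _ ≤ p * q := by nlinarith
  have goal' : s^3/3 * (1/p^2 - 1/q^2) ≤ s^2/3 * (1/p + 1/q) := by
    have expand : s^3/3 * (1/p^2 - 1/q^2) = (s * (q-p)) * ((p+q) * s^2 / (3*p^2*q^2)) := by
      field_simp; ring
    have expand2 : s^2/3 * (1/p + 1/q) = (p*q) * ((p+q) * s^2 / (3*p^2*q^2)) := by
      field_simp; ring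
    rw [expand, expand2]
    exact mul_le_mul_of_nonneg_right hkey (by positivity)
  have lhs_eq : p * (s/p - (s/p)^2/2 + (s/p)^3/3) + q * ((-s/q) - (-s/q)^2/2 + (-s/q)^3/3)
      = -(s^2/(2*p) + s^2/(2*q)) + (s^3/3 * (1/p^2 - 1/q^2)) := by
    field_simp; ring
  have rhs_eq : -(s^2/(6*p) + s^2/(6*q))
      = -(s^2/(2*p) + s^2/(2*q)) + s^2/3 * (1/p + 1/q) := by
    field_simp; ring
  rw [lhs_eq, rhs_eq]
  linarith

set_option maxHeartbeats 1000000 in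
lemma stmt19_key_bound (P Q : ℕ) (hP : 1 ≤ P) (hQ : 1 ≤ Q) (x : ℝ) (hx0 : 0 ≤ x) (hx1 : x ≤ 1)
    (ht : |x - (P:ℝ)/((P:ℝ)+Q)| * ((P:ℝ)+Q) ≤ min (P:ℝ) (Q:ℝ)) :
    x^P * (1-x)^Q ≤ ((P:ℝ)/((P:ℝ)+Q))^P * ((Q:ℝ)/((P:ℝ)+Q))^Q *
      Real.exp (-((((P:ℝ)+Q)^2/(6*P) + ((P:ℝ)+Q)^2/(6*Q)) * (x - (P:ℝ)/((P:ℝ)+Q))^2)) := by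
  have hp : 1 ≤ (P:ℝ) := by exact_mod_cast hP
  have hq : 1 ≤ (Q:ℝ) := by exact_mod_cast hQ
  obtain ⟨p, hpdef⟩ : ∃ p:ℝ, (P:ℝ) = p := ⟨_, rfl⟩
  obtain ⟨q, hqdef⟩ : ∃ q:ℝ, (Q:ℝ) = q := ⟨_, rfl⟩
  rw [hpdef] at hp; rw [hqdef] at hq
  rw [hpdef, hqdef] at ht ⊢
  have hp0 : (0:ℝ) < p := by linarith
  have hq0 : (0:ℝ) < q := by linarith
  have hs : (0:ℝ) < p + q := by linarith
  rcases eq_or_lt_of_le hx0 with h0 | h0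
  · rw [← h0, zero_pow (by omega), zero_mul]
    positivity
  rcases eq_or_lt_of_le hx1 with h1 | h1
  · rw [h1, sub_self, zero_pow (by omega), mul_zero]
    positivity
  have hx1' : 0 < 1 - x := by linarith
  -- abbreviations
  have hxeq : x = (p/(p+q)) * (1 + (x - p/(p+q))*(p+q)/p) := by
    field_simp
    ring
  have h1xeq : 1 - x = (q/(p+q)) * (1 + (-(x - p/(p+q)))*(p+q)/q) := by
    field_simp
    ring
  have hu1 : (0:ℝ) < 1 + (x - p/(p+q))*(p+q)/p := by
    have : (p/(p+q)) * (1 + (x - p/(p+q))*(p+q)/p) > 0 := hxeq ▸ h0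
    have hm : (0:ℝ) < p/(p+q) := by positivity
    nlinarith
  have hv1 : (0:ℝ) < 1 + (-(x - p/(p+q)))*(p+q)/q := by
    have : (q/(p+q)) * (1 + (-(x - p/(p+q)))*(p+q)/q) > 0 := h1xeq ▸ hx1'
    have hm : (0:ℝ) < q/(p+q) := by positivity
    nlinarith
  have hlog : p * Real.log (1 + (x - p/(p+q))*(p+q)/p)
      + q * Real.log (1 + (-(x - p/(p+q)))*(p+q)/q) ≤
      -(((p+q)^2/(6*p) + (p+q)^2/(6*q)) * (x - p/(p+q))^2) := by
    have l1 := stmt19_log_cubic ((x - p/(p+q))*(p+q)/p) (by linarith)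
    have l2 := stmt19_log_cubic ((-(x - p/(p+q)))*(p+q)/q) (by linarith)
    have halg := stmt19_alg_bound p q ((x - p/(p+q))*(p+q)) hp hq
      (by rw [abs_mul, abs_of_pos hs]; exact ht)
    have e1 : (x - p/(p+q))*(p+q)/p = ((x - p/(p+q))*(p+q))/p := by ring
    have e2 : (-(x - p/(p+q)))*(p+q)/q = (-((x - p/(p+q))*(p+q)))/q := by ring
    have e3 : ((x - p/(p+q))*(p+q))^2 = ((p+q)^2) * (x - p/(p+q))^2 := by ring
    have final : p * ((x - p/(p+q))*(p+q)/p - ((x - p/(p+q))*(p+q)/p)^2/2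
          + ((x - p/(p+q))*(p+q)/p)^3/3)
        + q * ((-(x - p/(p+q)))*(p+q)/q - ((-(x - p/(p+q)))*(p+q)/q)^2/2
          + ((-(x - p/(p+q)))*(p+q)/q)^3/3) ≤
        -(((p+q)^2/(6*p) + (p+q)^2/(6*q)) * (x - p/(p+q))^2) := by
      rw [e1, e2]
      refine le_trans halg (le_of_eq ?_)
      field_simp
    have m1 := mul_le_mul_of_nonneg_left l1 hp0.le
    have m2 := mul_le_mul_of_nonneg_left l2 hq0.le
    linarith [final]
  calc x^P * (1-x)^Q
      = ((p/(p+q))^P * ((q/(p+q)))^Q) *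
        ((1 + (x - p/(p+q))*(p+q)/p)^P * (1 + (-(x - p/(p+q)))*(p+q)/q)^Q) := by
        nth_rewrite 1 [hxeq]
        nth_rewrite 1 [h1xeq]
        rw [mul_pow, mul_pow]; ring
    _ ≤ ((p/(p+q))^P * ((q/(p+q)))^Q) *
        Real.exp (-(((p+q)^2/(6*p) + (p+q)^2/(6*q)) * (x - p/(p+q))^2)) := by
        apply mul_le_mul_of_nonneg_left _ (by positivity)
        have heq : (1 + (x - p/(p+q))*(p+q)/p)^P * (1 + (-(x - p/(p+q)))*(p+q)/q)^Q
            = Real.exp (p * Real.log (1 + (x - p/(p+q))*(p+q)/p)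
              + q * Real.log (1 + (-(x - p/(p+q)))*(p+q)/q)) := by
          have hPu : (1 + (x - p/(p+q))*(p+q)/p)^P
              = Real.exp ((P:ℝ) * Real.log (1 + (x - p/(p+q))*(p+q)/p)) := by
            rw [← Real.log_pow, Real.exp_log (pow_pos hu1 P)]
          have hQv : (1 + (-(x - p/(p+q)))*(p+q)/q)^Q
              = Real.exp ((Q:ℝ) * Real.log (1 + (-(x - p/(p+q)))*(p+q)/q)) := by
            rw [← Real.log_pow, Real.exp_log (pow_pos hv1 Q)]
          rw [hpdef] at hPu
          rw [hqdef] at hQv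
          rw [Real.exp_add, hPu, hQv]
        rw [heq]
        exact Real.exp_le_exp.mpr hlog

lemma stmt19_mode_bound (P Q : ℕ) (hP : 1 ≤ P) (hQ : 1 ≤ Q) :
    ((P+Q).factorial : ℝ) / (P.factorial * Q.factorial)
      * (((P:ℝ)/((P:ℝ)+Q))^P * ((Q:ℝ)/((P:ℝ)+Q))^Q)
      ≤ Real.exp 1 / (2*π) * Real.sqrt (((P:ℝ)+Q)/((P:ℝ)*Q)) := by
  have hp0 : (0:ℝ) < P := by exact_mod_cast hP
  have hq0 : (0:ℝ) < Q := by exact_mod_cast hQ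
  have hN0 : (0:ℝ) < (P:ℝ)+Q := by linarith
  have hNcast : ((P+Q : ℕ) : ℝ) = (P:ℝ)+Q := by push_cast; ring
  have hA := stmt19_fact_upper (P+Q) (by omega)
  rw [hNcast] at hA
  have hBP := stmt19_fact_lower P hP
  have hBQ := stmt19_fact_lower Q hQ
  have hfp : (0:ℝ) < P.factorial := by exact_mod_cast P.factorial_pos
  have hfq : (0:ℝ) < Q.factorial := by exact_mod_cast Q.factorial_pos
  have he : (0:ℝ) < Real.exp 1 := Real.exp_pos 1
  -- lower bound for the denominator
  have hB : 2*π*Real.sqrt ((P:ℝ)*Q) * ((P:ℝ)^P * (Q:ℝ)^Q) / Real.exp 1 ^ (P+Q)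
      ≤ (P.factorial : ℝ) * Q.factorial := by
    have key : 2*π*Real.sqrt ((P:ℝ)*Q) * ((P:ℝ)^P * (Q:ℝ)^Q) / Real.exp 1 ^ (P+Q)
        = (Real.sqrt (2*π*P) * ((P:ℝ)/Real.exp 1)^P)
          * (Real.sqrt (2*π*Q) * ((Q:ℝ)/Real.exp 1)^Q) := by
      have s1 : Real.sqrt (2*π*P) * Real.sqrt (2*π*Q) = 2*π*Real.sqrt ((P:ℝ)*Q) := by
        rw [← Real.sqrt_mul (by positivity)]
        have e1 : 2*π*(P:ℝ)*(2*π*(Q:ℝ)) = (2*π)^2 * ((P:ℝ)*Q) := by ring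
        rw [e1, Real.sqrt_mul (by positivity), Real.sqrt_sq (by positivity)]
      rw [div_pow, div_pow, pow_add, ← s1]
      field_simp
    rw [key]
    exact mul_le_mul hBP hBQ (by positivity) hfp.le
  have hpi : (0:ℝ) < π := Real.pi_pos
  have hsqPQ : (0:ℝ) < Real.sqrt ((P:ℝ)*Q) := Real.sqrt_pos.mpr (by positivity)
  have hsq : Real.sqrt (((P:ℝ)+Q)/((P:ℝ)*Q)) = Real.sqrt ((P:ℝ)+Q) / Real.sqrt ((P:ℝ)*Q) :=
    Real.sqrt_div hN0.le _
  rw [div_mul_eq_mul_div, div_le_iff₀ (by positivity)]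
  have hS : (0:ℝ) ≤ ((P:ℝ)/((P:ℝ)+Q))^P * ((Q:ℝ)/((P:ℝ)+Q))^Q := by positivity
  calc ((P+Q).factorial : ℝ) * (((P:ℝ)/((P:ℝ)+Q))^P * ((Q:ℝ)/((P:ℝ)+Q))^Q)
      ≤ (Real.exp 1 * Real.sqrt ((P:ℝ)+Q) * (((P:ℝ)+Q)/Real.exp 1)^(P+Q))
          * (((P:ℝ)/((P:ℝ)+Q))^P * ((Q:ℝ)/((P:ℝ)+Q))^Q) := mul_le_mul_of_nonneg_right hA hS
    _ = (Real.exp 1 / (2*π) * Real.sqrt (((P:ℝ)+Q)/((P:ℝ)*Q)))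
          * (2*π*Real.sqrt ((P:ℝ)*Q) * ((P:ℝ)^P * (Q:ℝ)^Q) / Real.exp 1 ^ (P+Q)) := by
        rw [hsq, div_pow, div_pow, div_pow]
        field_simp
        ring
    _ ≤ (Real.exp 1 / (2*π) * Real.sqrt (((P:ℝ)+Q)/((P:ℝ)*Q)))
          * ((P.factorial : ℝ) * Q.factorial) := by
        apply mul_le_mul_of_nonneg_left hB
        positivity

lemma stmt19_deriv_poly (P Q : ℕ) (hP : 1 ≤ P) (hQ : 1 ≤ Q) (x : ℝ) :
    HasDerivAt (fun y : ℝ => y^P * (1-y)^Q)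
      (x^(P-1) * (1-x)^(Q-1) * ((P:ℝ) - ((P:ℝ)+Q)*x)) x := by
  have h1 : HasDerivAt (fun y : ℝ => y^P) ((P:ℝ) * x^(P-1)) x := hasDerivAt_pow P x
  have h2 : HasDerivAt (fun y : ℝ => (1-y)^Q) (-((Q:ℝ) * (1-x)^(Q-1))) x := by
    have hb : HasDerivAt (fun y : ℝ => 1 - y) (-1) x := by
      simpa using (hasDerivAt_id x).const_sub 1
    have := (hasDerivAt_pow Q (1-x)).comp x hb
    exact this.congr_deriv (by ring)
  have := h1.mul h2
  refine this.congr_deriv ?_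
  have hxP : x^P = x^(P-1) * x := by
    conv_lhs => rw [show P = (P-1)+1 by omega]
    rw [pow_succ]
  have hxQ : (1-x)^Q = (1-x)^(Q-1) * (1-x) := by
    conv_lhs => rw [show Q = (Q-1)+1 by omega]
    rw [pow_succ]
  rw [hxP, hxQ]
  ring

lemma stmt19_mono_left (P Q : ℕ) (hP : 1 ≤ P) (hQ : 1 ≤ Q) :
    MonotoneOn (fun x : ℝ => x^P * (1-x)^Q) (Set.Icc 0 ((P:ℝ)/((P:ℝ)+Q))) := by
  have hp0 : (0:ℝ) < P := by exact_mod_cast hP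
  have hq0 : (0:ℝ) < Q := by exact_mod_cast hQ
  have hs : (0:ℝ) < (P:ℝ)+Q := by linarith
  apply monotoneOn_of_deriv_nonneg (convex_Icc _ _) (by fun_prop)
  · intro x hx
    exact (stmt19_deriv_poly P Q hP hQ x).differentiableAt.differentiableWithinAt
  · intro x hx
    rw [interior_Icc, Set.mem_Ioo] at hx
    rw [(stmt19_deriv_poly P Q hP hQ x).deriv]
    have hxm : x < (P:ℝ)/((P:ℝ)+Q) := hx.2
    have h1 : (0:ℝ) ≤ (P:ℝ) - ((P:ℝ)+Q)*x := by
      rw [lt_div_iff₀ hs] at hxm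
      nlinarith
    have h2 : (0:ℝ) < 1 - x := by
      have : (P:ℝ)/((P:ℝ)+Q) < 1 := by rw [div_lt_one hs]; linarith
      linarith
    exact mul_nonneg (mul_nonneg (pow_nonneg hx.1.le _) (pow_nonneg h2.le _)) h1
  
lemma stmt19_anti_right (P Q : ℕ) (hP : 1 ≤ P) (hQ : 1 ≤ Q) :
    AntitoneOn (fun x : ℝ => x^P * (1-x)^Q) (Set.Icc ((P:ℝ)/((P:ℝ)+Q)) 1) := by
  have hp0 : (0:ℝ) < P := by exact_mod_cast hP
  have hq0 : (0:ℝ) < Q := by exact_mod_cast hQ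
  have hs : (0:ℝ) < (P:ℝ)+Q := by linarith
  apply antitoneOn_of_deriv_nonpos (convex_Icc _ _) (by fun_prop)
  · intro x hx
    exact (stmt19_deriv_poly P Q hP hQ x).differentiableAt.differentiableWithinAt
  · intro x hx
    rw [interior_Icc, Set.mem_Ioo] at hx
    rw [(stmt19_deriv_poly P Q hP hQ x).deriv]
    have hxm : (P:ℝ)/((P:ℝ)+Q) < x := hx.1
    have h0 : (0:ℝ) < x := lt_trans (by positivity) hxm
    have h1 : (P:ℝ) - ((P:ℝ)+Q)*x ≤ 0 := by
      rw [div_lt_iff₀ hs] at hxm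
      nlinarith
    have h2 : (0:ℝ) ≤ 1 - x := by linarith [hx.2]
    have h3 : (0:ℝ) ≤ x^(P-1) * (1-x)^(Q-1) := by positivity
    exact mul_nonpos_of_nonneg_of_nonpos h3 h1

lemma stmt19_density_bound (P Q : ℕ) (hP : 1 ≤ P) (hQ : 1 ≤ Q) (x : ℝ)
    (hx0 : 0 ≤ x) (hx1 : x ≤ 1)
    (ht : |x - (P:ℝ)/((P:ℝ)+Q)| * ((P:ℝ)+Q) ≤ min (P:ℝ) (Q:ℝ)) :
    ((P+Q+1).factorial : ℝ) / (P.factorial * Q.factorial) * x^P * (1-x)^Q ≤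
      20/π * ((P:ℝ)+Q+1) * Real.sqrt (((P:ℝ)+Q+1)/((P:ℝ)*Q)) *
        Real.exp (-((((P:ℝ)+Q)^2/(6*P) + ((P:ℝ)+Q)^2/(6*Q)) * (x - (P:ℝ)/((P:ℝ)+Q))^2)) := by
  have hp0 : (0:ℝ) < P := by exact_mod_cast hP
  have hq0 : (0:ℝ) < Q := by exact_mod_cast hQ
  have hpi : (0:ℝ) < π := Real.pi_pos
  have hC : (0:ℝ) ≤ ((P+Q+1).factorial : ℝ) / (P.factorial * Q.factorial) := by positivity
  have hkb := stmt19_key_bound P Q hP hQ x hx0 hx1 ht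
  have hfs : ((P+Q+1).factorial : ℝ) = ((P:ℝ)+Q+1) * ((P+Q).factorial : ℝ) := by
    rw [Nat.factorial_succ]
    push_cast
    ring
  have hnum : Real.exp 1/(2*π) * Real.sqrt (((P:ℝ)+Q)/((P:ℝ)*Q))
      ≤ 20/π * Real.sqrt (((P:ℝ)+Q+1)/((P:ℝ)*Q)) := by
    apply mul_le_mul
    · rw [div_le_div_iff₀ (by positivity) hpi]
      nlinarith [Real.exp_one_lt_d9, hpi]
    · apply Real.sqrt_le_sqrt
      apply div_le_div_of_nonneg_right ?_ (by positivity)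
      linarith
    · exact Real.sqrt_nonneg _
    · positivity
  calc ((P+Q+1).factorial : ℝ) / (P.factorial * Q.factorial) * x^P * (1-x)^Q
      = ((P+Q+1).factorial : ℝ) / (P.factorial * Q.factorial) * (x^P * (1-x)^Q) := by ring
    _ ≤ ((P+Q+1).factorial : ℝ) / (P.factorial * Q.factorial) *
        (((P:ℝ)/((P:ℝ)+Q))^P * ((Q:ℝ)/((P:ℝ)+Q))^Q *
          Real.exp (-((((P:ℝ)+Q)^2/(6*P) + ((P:ℝ)+Q)^2/(6*Q)) * (x - (P:ℝ)/((P:ℝ)+Q))^2))) :=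
        mul_le_mul_of_nonneg_left hkb hC
    _ = (((P:ℝ)+Q+1) * (((P+Q).factorial : ℝ) / (P.factorial * Q.factorial) *
          (((P:ℝ)/((P:ℝ)+Q))^P * ((Q:ℝ)/((P:ℝ)+Q))^Q))) *
          Real.exp (-((((P:ℝ)+Q)^2/(6*P) + ((P:ℝ)+Q)^2/(6*Q)) * (x - (P:ℝ)/((P:ℝ)+Q))^2)) := by
        rw [hfs]; ring
    _ ≤ (((P:ℝ)+Q+1) * (Real.exp 1/(2*π) * Real.sqrt (((P:ℝ)+Q)/((P:ℝ)*Q)))) *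
          Real.exp (-((((P:ℝ)+Q)^2/(6*P) + ((P:ℝ)+Q)^2/(6*Q)) * (x - (P:ℝ)/((P:ℝ)+Q))^2)) := by
        apply mul_le_mul_of_nonneg_right _ (Real.exp_pos _).le
        exact mul_le_mul_of_nonneg_left (stmt19_mode_bound P Q hP hQ) (by positivity)
    _ ≤ 20/π * ((P:ℝ)+Q+1) * Real.sqrt (((P:ℝ)+Q+1)/((P:ℝ)*Q)) *
          Real.exp (-((((P:ℝ)+Q)^2/(6*P) + ((P:ℝ)+Q)^2/(6*Q)) * (x - (P:ℝ)/((P:ℝ)+Q))^2)) := by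
        apply mul_le_mul_of_nonneg_right _ (Real.exp_pos _).le
        calc ((P:ℝ)+Q+1) * (Real.exp 1/(2*π) * Real.sqrt (((P:ℝ)+Q)/((P:ℝ)*Q)))
            ≤ ((P:ℝ)+Q+1) * (20/π * Real.sqrt (((P:ℝ)+Q+1)/((P:ℝ)*Q))) :=
              mul_le_mul_of_nonneg_left hnum (by positivity)
          _ = 20/π * ((P:ℝ)+Q+1) * Real.sqrt (((P:ℝ)+Q+1)/((P:ℝ)*Q)) := by ring

/-- Explicit Gaussian-type pointwise bounds for the density of the
`k`-th order statistic of `n` i.i.d. uniform `[0,1]` random variables, `2 ≤ k ≤ n−1`. -/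
theorem stmt19 (n k : ℕ) (hk : 2 ≤ k) (hkn : k + 1 ≤ n)
    (m A : ℝ)
    (hm : m = ((k : ℝ) - 1) / ((n : ℝ) - 1))
    (hA : A = ((n : ℝ) - 1) ^ 2 / (6 * ((k : ℝ) - 1))
            + ((n : ℝ) - 1) ^ 2 / (6 * ((n : ℝ) - (k : ℝ)))) :
    (∀ x ∈ Set.Icc (0 : ℝ) 1,
      |x - m| ≤ (1 - (2 : ℝ) ^ (-(1 / 3 : ℝ))) *
          min (((k : ℝ) - 1) / ((n : ℝ) - 1)) (((n : ℝ) - (k : ℝ)) / ((n : ℝ) - 1)) →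
        orderStatDensity n k x ≤
          20 / Real.pi * (n : ℝ)
            * Real.sqrt ((n : ℝ) / (((k : ℝ) - 1) * ((n : ℝ) - (k : ℝ))))
            * Real.exp (-(A * (x - m) ^ 2)))
    ∧
    (∀ c : ℝ, 0 ≤ c →
      c ≤ (1 - (2 : ℝ) ^ (-(1 / 3 : ℝ))) *
          min (((k : ℝ) - 1) / ((n : ℝ) - 1)) (((n : ℝ) - (k : ℝ)) / ((n : ℝ) - 1)) →
      ∀ x ∈ Set.Icc (0 : ℝ) 1, c ≤ |x - m| →
        orderStatDensity n k x ≤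
          20 / Real.pi * (n : ℝ)
            * Real.sqrt ((n : ℝ) / (((k : ℝ) - 1) * ((n : ℝ) - (k : ℝ))))
            * Real.exp (-(A * c ^ 2))) := by
  have h1p : 1 ≤ k - 1 := by omega
  have h1q : 1 ≤ n - k := by omega
  have hc1 : ((k:ℝ) - 1) = ((k-1:ℕ):ℝ) := by
    rw [Nat.cast_sub (by omega : 1 ≤ k)]; norm_num
  have hc2 : ((n:ℝ) - (k:ℝ)) = ((n-k:ℕ):ℝ) := by
    rw [Nat.cast_sub (by omega : k ≤ n)]
  have hc3 : ((n:ℝ) - 1) = ((k-1:ℕ):ℝ) + ((n-k:ℕ):ℝ) := by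
    rw [Nat.cast_sub (by omega : 1 ≤ k), Nat.cast_sub (by omega : k ≤ n)]
    push_cast; ring
  have hc4 : (n:ℝ) = ((k-1:ℕ):ℝ) + ((n-k:ℕ):ℝ) + 1 := by linarith
  have hfa : n.factorial = ((k-1)+(n-k)+1).factorial := by congr 1; omega
  have hp0 : (0:ℝ) < ((k-1:ℕ):ℝ) := by exact_mod_cast h1p
  have hq0 : (0:ℝ) < ((n-k:ℕ):ℝ) := by exact_mod_cast h1q
  have hN0 : (0:ℝ) < ((k-1:ℕ):ℝ) + ((n-k:ℕ):ℝ) := by linarith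
  have hδle : (1:ℝ) - (2:ℝ)^(-(1/3:ℝ)) ≤ 1 := by
    have : (0:ℝ) ≤ (2:ℝ)^(-(1/3:ℝ)) := Real.rpow_nonneg (by norm_num) _
    linarith
  have hmin : min (((k-1:ℕ):ℝ)/(((k-1:ℕ):ℝ)+((n-k:ℕ):ℝ))) (((n-k:ℕ):ℝ)/(((k-1:ℕ):ℝ)+((n-k:ℕ):ℝ)))
      = min ((k-1:ℕ):ℝ) ((n-k:ℕ):ℝ) / (((k-1:ℕ):ℝ)+((n-k:ℕ):ℝ)) :=
    min_div_div_right hN0.le _ _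
  have hminnn : (0:ℝ) ≤ min ((k-1:ℕ):ℝ) ((n-k:ℕ):ℝ) := le_min hp0.le hq0.le
  subst hm hA
  rw [hc1, hc2, hc3, hc4, hmin]
  have hC0 : (0:ℝ) ≤ (((k-1)+(n-k)+1).factorial : ℝ) / ((k-1).factorial * (n-k).factorial) := by
    positivity
  constructor
  · -- part (i)
    intro x hx hxle
    have ht : |x - ((k-1:ℕ):ℝ)/(((k-1:ℕ):ℝ)+((n-k:ℕ):ℝ))| * (((k-1:ℕ):ℝ)+((n-k:ℕ):ℝ))
        ≤ min ((k-1:ℕ):ℝ) ((n-k:ℕ):ℝ) := by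
      rw [← le_div_iff₀ hN0]
      calc |x - ((k-1:ℕ):ℝ)/(((k-1:ℕ):ℝ)+((n-k:ℕ):ℝ))|
          ≤ (1 - (2:ℝ)^(-(1/3:ℝ))) * (min ((k-1:ℕ):ℝ) ((n-k:ℕ):ℝ) / (((k-1:ℕ):ℝ)+((n-k:ℕ):ℝ))) := hxle
        _ ≤ 1 * (min ((k-1:ℕ):ℝ) ((n-k:ℕ):ℝ) / (((k-1:ℕ):ℝ)+((n-k:ℕ):ℝ))) := by
            apply mul_le_mul_of_nonneg_right hδle (by positivity)
        _ = min ((k-1:ℕ):ℝ) ((n-k:ℕ):ℝ) / (((k-1:ℕ):ℝ)+((n-k:ℕ):ℝ)) := one_mul _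
    unfold orderStatDensity
    rw [hfa]
    exact stmt19_density_bound (k-1) (n-k) h1p h1q x hx.1 hx.2 ht
  · -- part (ii)
    intro c hc0 hcr x hx hcx
    have hcb : c ≤ min ((k-1:ℕ):ℝ) ((n-k:ℕ):ℝ) / (((k-1:ℕ):ℝ)+((n-k:ℕ):ℝ)) := by
      calc c ≤ (1 - (2:ℝ)^(-(1/3:ℝ))) * (min ((k-1:ℕ):ℝ) ((n-k:ℕ):ℝ) / (((k-1:ℕ):ℝ)+((n-k:ℕ):ℝ))) := hcr
        _ ≤ 1 * (min ((k-1:ℕ):ℝ) ((n-k:ℕ):ℝ) / (((k-1:ℕ):ℝ)+((n-k:ℕ):ℝ))) :=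
            mul_le_mul_of_nonneg_right hδle (by positivity)
        _ = _ := one_mul _
    have hcm : c ≤ ((k-1:ℕ):ℝ)/(((k-1:ℕ):ℝ)+((n-k:ℕ):ℝ)) :=
      le_trans hcb (div_le_div_of_nonneg_right (min_le_left _ _) hN0.le)
    have hcq : c ≤ ((n-k:ℕ):ℝ)/(((k-1:ℕ):ℝ)+((n-k:ℕ):ℝ)) :=
      le_trans hcb (div_le_div_of_nonneg_right (min_le_right _ _) hN0.le)
    have hm1 : ((k-1:ℕ):ℝ)/(((k-1:ℕ):ℝ)+((n-k:ℕ):ℝ)) < 1 := by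
      rw [div_lt_one hN0]; linarith
    have hm0 : (0:ℝ) < ((k-1:ℕ):ℝ)/(((k-1:ℕ):ℝ)+((n-k:ℕ):ℝ)) := by positivity
    have hsum : ((k-1:ℕ):ℝ)/(((k-1:ℕ):ℝ)+((n-k:ℕ):ℝ)) + ((n-k:ℕ):ℝ)/(((k-1:ℕ):ℝ)+((n-k:ℕ):ℝ)) = 1 := by
      rw [← add_div, div_self hN0.ne']
    -- the boundary point y (= m ∓ c) bound
    have hbody : ∀ y : ℝ, 0 ≤ y → y ≤ 1 →
        |y - ((k-1:ℕ):ℝ)/(((k-1:ℕ):ℝ)+((n-k:ℕ):ℝ))| = c →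
        (((k-1)+(n-k)+1).factorial : ℝ) / ((k-1).factorial * (n-k).factorial)
            * y^(k-1) * (1-y)^(n-k) ≤
          20/π * (((k-1:ℕ):ℝ)+((n-k:ℕ):ℝ)+1)
            * Real.sqrt ((((k-1:ℕ):ℝ)+((n-k:ℕ):ℝ)+1)/(((k-1:ℕ):ℝ)*((n-k:ℕ):ℝ)))
            * Real.exp (-(((((k-1:ℕ):ℝ)+((n-k:ℕ):ℝ))^2/(6*((k-1:ℕ):ℝ))
                + (((k-1:ℕ):ℝ)+((n-k:ℕ):ℝ))^2/(6*((n-k:ℕ):ℝ))) * c^2)) := by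
      intro y hy0 hy1 hyc
      have ht' : |y - ((k-1:ℕ):ℝ)/(((k-1:ℕ):ℝ)+((n-k:ℕ):ℝ))| * (((k-1:ℕ):ℝ)+((n-k:ℕ):ℝ))
          ≤ min ((k-1:ℕ):ℝ) ((n-k:ℕ):ℝ) := by
        rw [hyc, ← le_div_iff₀ hN0]
        exact hcb
      have := stmt19_density_bound (k-1) (n-k) h1p h1q y hy0 hy1 ht'
      have hsq : (y - ((k-1:ℕ):ℝ)/(((k-1:ℕ):ℝ)+((n-k:ℕ):ℝ)))^2 = c^2 := by
        rw [← sq_abs, hyc]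
      rwa [hsq] at this
    rcases le_total x (((k-1:ℕ):ℝ)/(((k-1:ℕ):ℝ)+((n-k:ℕ):ℝ))) with hxm | hxm
    · -- left side: use y = m - c
      have hxabs : |x - ((k-1:ℕ):ℝ)/(((k-1:ℕ):ℝ)+((n-k:ℕ):ℝ))|
          = ((k-1:ℕ):ℝ)/(((k-1:ℕ):ℝ)+((n-k:ℕ):ℝ)) - x := by
        rw [abs_of_nonpos (by linarith)]; ring
      have hxy : x ≤ ((k-1:ℕ):ℝ)/(((k-1:ℕ):ℝ)+((n-k:ℕ):ℝ)) - c := by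
        rw [hxabs] at hcx; linarith
      have hmem1 : x ∈ Set.Icc (0:ℝ) (((k-1:ℕ):ℝ)/(((k-1:ℕ):ℝ)+((n-k:ℕ):ℝ))) := ⟨hx.1, hxm⟩
      have hmem2 : ((k-1:ℕ):ℝ)/(((k-1:ℕ):ℝ)+((n-k:ℕ):ℝ)) - c
          ∈ Set.Icc (0:ℝ) (((k-1:ℕ):ℝ)/(((k-1:ℕ):ℝ)+((n-k:ℕ):ℝ))) := ⟨by linarith, by linarith⟩
      have hmono := stmt19_mono_left (k-1) (n-k) h1p h1q hmem1 hmem2 hxy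
      simp only at hmono
      have hyb := hbody (((k-1:ℕ):ℝ)/(((k-1:ℕ):ℝ)+((n-k:ℕ):ℝ)) - c) (by linarith) (by linarith)
        (by rw [abs_of_nonpos (by linarith : ((k-1:ℕ):ℝ)/(((k-1:ℕ):ℝ)+((n-k:ℕ):ℝ)) - c - ((k-1:ℕ):ℝ)/(((k-1:ℕ):ℝ)+((n-k:ℕ):ℝ)) ≤ 0)]; ring)
      unfold orderStatDensity
      rw [hfa]
      calc (((k-1)+(n-k)+1).factorial : ℝ) / ((k-1).factorial * (n-k).factorial)
            * x^(k-1) * (1-x)^(n-k)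
          = (((k-1)+(n-k)+1).factorial : ℝ) / ((k-1).factorial * (n-k).factorial)
            * (x^(k-1) * (1-x)^(n-k)) := by ring
        _ ≤ (((k-1)+(n-k)+1).factorial : ℝ) / ((k-1).factorial * (n-k).factorial)
            * ((((k-1:ℕ):ℝ)/(((k-1:ℕ):ℝ)+((n-k:ℕ):ℝ)) - c)^(k-1)
              * (1-(((k-1:ℕ):ℝ)/(((k-1:ℕ):ℝ)+((n-k:ℕ):ℝ)) - c))^(n-k)) :=
            mul_le_mul_of_nonneg_left hmono hC0
        _ = (((k-1)+(n-k)+1).factorial : ℝ) / ((k-1).factorial * (n-k).factorial)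
            * (((k-1:ℕ):ℝ)/(((k-1:ℕ):ℝ)+((n-k:ℕ):ℝ)) - c)^(k-1)
              * (1-(((k-1:ℕ):ℝ)/(((k-1:ℕ):ℝ)+((n-k:ℕ):ℝ)) - c))^(n-k) := by ring
        _ ≤ _ := hyb
    · -- right side: use y = m + c
      have hxabs : |x - ((k-1:ℕ):ℝ)/(((k-1:ℕ):ℝ)+((n-k:ℕ):ℝ))|
          = x - ((k-1:ℕ):ℝ)/(((k-1:ℕ):ℝ)+((n-k:ℕ):ℝ)) := abs_of_nonneg (by linarith)
      have hxy : ((k-1:ℕ):ℝ)/(((k-1:ℕ):ℝ)+((n-k:ℕ):ℝ)) + c ≤ x := by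
        rw [hxabs] at hcx; linarith
      have hyle1 : ((k-1:ℕ):ℝ)/(((k-1:ℕ):ℝ)+((n-k:ℕ):ℝ)) + c ≤ 1 := by
        have := hsum
        linarith
      have hmem1 : ((k-1:ℕ):ℝ)/(((k-1:ℕ):ℝ)+((n-k:ℕ):ℝ)) + c
          ∈ Set.Icc (((k-1:ℕ):ℝ)/(((k-1:ℕ):ℝ)+((n-k:ℕ):ℝ))) 1 := ⟨by linarith, hyle1⟩
      have hmem2 : x ∈ Set.Icc (((k-1:ℕ):ℝ)/(((k-1:ℕ):ℝ)+((n-k:ℕ):ℝ))) 1 := ⟨hxm, hx.2⟩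
      have hmono := stmt19_anti_right (k-1) (n-k) h1p h1q hmem1 hmem2 hxy
      simp only at hmono
      have hyb := hbody (((k-1:ℕ):ℝ)/(((k-1:ℕ):ℝ)+((n-k:ℕ):ℝ)) + c) (by linarith) hyle1
        (by rw [abs_of_nonneg (by linarith : (0:ℝ) ≤ ((k-1:ℕ):ℝ)/(((k-1:ℕ):ℝ)+((n-k:ℕ):ℝ)) + c - ((k-1:ℕ):ℝ)/(((k-1:ℕ):ℝ)+((n-k:ℕ):ℝ)))]; ring)
      unfold orderStatDensity
      rw [hfa]
      calc (((k-1)+(n-k)+1).factorial : ℝ) / ((k-1).factorial * (n-k).factorial)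
            * x^(k-1) * (1-x)^(n-k)
          = (((k-1)+(n-k)+1).factorial : ℝ) / ((k-1).factorial * (n-k).factorial)
            * (x^(k-1) * (1-x)^(n-k)) := by ring
        _ ≤ (((k-1)+(n-k)+1).factorial : ℝ) / ((k-1).factorial * (n-k).factorial)
            * ((((k-1:ℕ):ℝ)/(((k-1:ℕ):ℝ)+((n-k:ℕ):ℝ)) + c)^(k-1)
              * (1-(((k-1:ℕ):ℝ)/(((k-1:ℕ):ℝ)+((n-k:ℕ):ℝ)) + c))^(n-k)) :=
            mul_le_mul_of_nonneg_left hmono hC0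
        _ = (((k-1)+(n-k)+1).factorial : ℝ) / ((k-1).factorial * (n-k).factorial)
            * (((k-1:ℕ):ℝ)/(((k-1:ℕ):ℝ)+((n-k:ℕ):ℝ)) + c)^(k-1)
              * (1-(((k-1:ℕ):ℝ)/(((k-1:ℕ):ℝ)+((n-k:ℕ):ℝ)) + c))^(n-k) := by ring
        _ ≤ _ := hyb
end
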